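/- Let 0 ≤ k ≤ n and let η be a probability measure on {0,1}^ℤ invariant under 𝕊^{2^k}. Then D_n[η] = D_k[η], i.e., ∑_{i=0}^{2^n−1} (𝕊^i η) × (χ_{A_{i,n}} m) = ∑_{i=0}^{2^k−1} (𝕊^i η) × (χ_{A_{i,k}} m). -/

import Mathlib

open MeasureTheory Classical

/-- The left shift on {0,1}^ℤ. -/
def shiftZ (w : ℤ → Bool) : ℤ → Bool := fun i => w (i + 1)

/-- The dyadic cylinder A_{r,j} = {α : ∑_{i<j} α_i 2^i = r}. -/
def cylA (r j : ℕ) : Set (ℕ → Bool) :=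
  {α | (∑ i ∈ Finset.range j, if α i then 2 ^ i else 0) = r}

lemma measurable_shiftZ : Measurable shiftZ :=
  measurable_pi_lambda _ fun i => measurable_pi_apply (i + 1)

lemma measurableSet_cylA (r j : ℕ) : MeasurableSet (cylA r j) := by
  have h : cylA r j =
      (fun α : ℕ → Bool => ∑ i ∈ Finset.range j, if α i then 2 ^ i else 0) ⁻¹' {r} := rfl
  rw [h]
  exact (Finset.measurable_sum _ fun i _ => Measurable.ite
    ((measurable_pi_apply i) (measurableSet_singleton true)) measurable_const measurable_const)
    (measurableSet_singleton r)

lemma map_iterate {η : Measure (ℤ → Bool)} {f : (ℤ → Bool) → (ℤ → Bool)}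
    (hf : Measurable f) (h : Measure.map f η = η) (t : ℕ) :
    Measure.map (f^[t]) η = η := by
  induction t with
  | zero => simp [Measure.map_id]
  | succ t ih =>
      rw [Function.iterate_succ', ← Measure.map_map hf (hf.iterate t), ih, h]

lemma sum_lt (α : ℕ → Bool) (j : ℕ) :
    (∑ i ∈ Finset.range j, if α i then 2 ^ i else 0) < 2 ^ j := by
  induction j with
  | zero => simp
  | succ j ih =>
      rw [Finset.sum_range_succ, pow_succ]
      split <;> omega

lemma cylA_split (r j : ℕ) (hr : r < 2 ^ j) :
    cylA r j = cylA r (j + 1) ∪ cylA (r + 2 ^ j) (j + 1) := by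
  ext α
  have h1 := sum_lt α j
  simp only [cylA, Set.mem_setOf_eq, Set.mem_union, Finset.sum_range_succ]
  split <;> omega

lemma cylA_disj (r j : ℕ) :
    Disjoint (cylA r (j + 1)) (cylA (r + 2 ^ j) (j + 1)) := by
  rw [Set.disjoint_left]
  intro α h1 h2
  simp only [cylA, Set.mem_setOf_eq] at h1 h2
  have : (0:ℕ) < 2 ^ j := by positivity
  omega

lemma sum_range_split {M : Type*} [AddCommMonoid M] (a b : ℕ) (f : ℕ → M) :
    ∑ i ∈ Finset.range (a + b), f i
      = ∑ i ∈ Finset.range a, f i + ∑ i ∈ Finset.range b, f (a + i) := by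
  induction b with
  | zero => simp
  | succ b ih => rw [← Nat.add_assoc, Finset.sum_range_succ, ih, Finset.sum_range_succ, add_assoc]

theorem Dn_eq_Dk (k n : ℕ) (hkn : k ≤ n)
    (η : Measure (ℤ → Bool)) [IsProbabilityMeasure η]
    (hη : Measure.map (shiftZ^[2 ^ k]) η = η)
    (m : Measure (ℕ → Bool)) [IsProbabilityMeasure m]
    (hm : ∀ (s : Finset ℕ) (f : ℕ → Bool),
      m {α | ∀ i ∈ s, α i = f i} = (1 / 2 : ENNReal) ^ s.card) :
    (∑ i ∈ Finset.range (2 ^ n),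
        (Measure.map (shiftZ^[i]) η).prod (m.restrict (cylA i n))) =
      ∑ i ∈ Finset.range (2 ^ k),
        (Measure.map (shiftZ^[i]) η).prod (m.restrict (cylA i k)) := by
  induction n, hkn using Nat.le_induction with
  | base => rfl
  | succ j hj ih =>
      rw [← ih]
      -- invariance under shiftZ^[2^j]
      have hinv : Measure.map (shiftZ^[2 ^ j]) η = η := by
        have h2 : (2:ℕ) ^ j = 2 ^ k * 2 ^ (j - k) := by
          rw [← pow_add]; congr 1; omega
        rw [h2, Function.iterate_mul]
        exact map_iterate (measurable_shiftZ.iterate _) hη _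
      have key : ∀ r < 2 ^ j,
          (Measure.map (shiftZ^[r]) η).prod (m.restrict (cylA r (j + 1)))
            + (Measure.map (shiftZ^[2 ^ j + r]) η).prod (m.restrict (cylA (2 ^ j + r) (j + 1)))
          = (Measure.map (shiftZ^[r]) η).prod (m.restrict (cylA r j)) := by
        intro r hr
        have hmap : Measure.map (shiftZ^[2 ^ j + r]) η = Measure.map (shiftZ^[r]) η := by
          rw [Nat.add_comm, Function.iterate_add, ← Measure.map_map
            (measurable_shiftZ.iterate r) (measurable_shiftZ.iterate (2 ^ j)), hinv]
        rw [hmap, Nat.add_comm (2 ^ j) r]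
        rw [← Measure.prod_add, ← Measure.restrict_union (cylA_disj r j)
          (measurableSet_cylA _ _), ← cylA_split r j hr]
      have h2j : (2:ℕ) ^ (j + 1) = 2 ^ j + 2 ^ j := by rw [pow_succ]; omega
      rw [h2j, sum_range_split, ← Finset.sum_add_distrib]
      exact Finset.sum_congr rfl fun r hr => key r (Finset.mem_range.mp hr)
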